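/- Set H₁ = σ₁ P σ₁⁻¹ ∩ P. Then P is the disjoint union of the double cosets H₁·S_ψ and H₁·τ₁·S_ψ; that is, {I₄, τ₁} is a complete set of (H₁, S_ψ)-double coset representatives in P. -/
import Mathlib


open Matrix

variable (F : Type*) [Field F]

/-- The standard alternating matrix `J = [[0, I₂], [-I₂, 0]]`. -/
def Jmat : Matrix (Fin 2 ⊕ Fin 2) (Fin 2 ⊕ Fin 2) F := Matrix.fromBlocks 0 1 (-1) 0

/-- The symplectic group `Sp₄(F)`, as a set of matrices. -/
def Sp4 : Set (Matrix (Fin 2 ⊕ Fin 2) (Fin 2 ⊕ Fin 2) F) :=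
  {g | gᵀ * Jmat F * g = Jmat F}

/-- The Siegel parabolic subgroup `P` of `Sp₄(F)`, as a set of matrices. -/
def P4 : Set (Matrix (Fin 2 ⊕ Fin 2) (Fin 2 ⊕ Fin 2) F) :=
  {m | ∃ g X : Matrix (Fin 2) (Fin 2) F,
    IsUnit g ∧ (g⁻¹ * X)ᵀ = g⁻¹ * X ∧ m = Matrix.fromBlocks g X 0 (g⁻¹)ᵀ}

/-- `O₂(F, C) = {[[a, 0], [y, d]] : a² = 1, d ≠ 0, y ∈ F}`. -/
def O2C : Set (Matrix (Fin 2) (Fin 2) F) :=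
  {g | ∃ a d y : F, a ^ 2 = 1 ∧ d ≠ 0 ∧ g = !![a, 0; y, d]}

/-- `S_ψ = {[[g, X], [0, ᵗg⁻¹]] ∈ P : g ∈ O₂(F, C)}`. -/
def Spsi : Set (Matrix (Fin 2 ⊕ Fin 2) (Fin 2 ⊕ Fin 2) F) :=
  {m | ∃ g X : Matrix (Fin 2) (Fin 2) F,
    g ∈ O2C F ∧ IsUnit g ∧ (g⁻¹ * X)ᵀ = g⁻¹ * X ∧ m = Matrix.fromBlocks g X 0 (g⁻¹)ᵀ}

/-- `σ₁ = [[0,0,-1,0],[0,1,0,0],[1,0,0,0],[0,0,0,1]]`. -/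
def sig1 : Matrix (Fin 2 ⊕ Fin 2) (Fin 2 ⊕ Fin 2) F :=
  Matrix.fromBlocks !![0, 0; 0, 1] !![-1, 0; 0, 0] !![1, 0; 0, 0] !![0, 0; 0, 1]

/-- `σ₂ = [[0, -I₂], [I₂, 0]]`. -/
def sig2 : Matrix (Fin 2 ⊕ Fin 2) (Fin 2 ⊕ Fin 2) F := Matrix.fromBlocks 0 (-1) 1 0

/-- `τ₁ = diag(h₁, h₁)` with `h₁ = [[0,1],[1,0]]`. -/
def tau1 : Matrix (Fin 2 ⊕ Fin 2) (Fin 2 ⊕ Fin 2) F :=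
  Matrix.fromBlocks !![0, 1; 1, 0] 0 0 !![0, 1; 1, 0]

/-- Double coset `A · w · B`. -/
def DC {α : Type*} [Mul α] (A : Set α) (w : α) (B : Set α) : Set α :=
  {x | ∃ a ∈ A, ∃ b ∈ B, x = a * w * b}

/-- `H₁ = σ₁ P σ₁⁻¹ ∩ P`. -/
def H1 : Set (Matrix (Fin 2 ⊕ Fin 2) (Fin 2 ⊕ Fin 2) F) :=
  {m | ∃ p ∈ P4 F, m = sig1 F * p * (sig1 F)⁻¹} ∩ P4 F


section Aux

variable {F : Type*} [Field F]

/-- Explicit inverse of `σ₁`. -/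
def sig1inv (F : Type*) [Field F] : Matrix (Fin 2 ⊕ Fin 2) (Fin 2 ⊕ Fin 2) F :=
  Matrix.fromBlocks !![0,0;0,1] !![1,0;0,0] !![-1,0;0,0] !![0,0;0,1]

lemma sig1_mul_sig1inv : sig1 F * sig1inv F = 1 := by
  ext (i|i) (j|j) <;> fin_cases i <;> fin_cases j <;>
    simp [sig1, sig1inv, Matrix.mul_apply, Fintype.sum_sum_type, Fin.sum_univ_two,
      Matrix.one_apply]

lemma sig1_inv_eq : (sig1 F)⁻¹ = sig1inv F := Matrix.inv_eq_right_inv sig1_mul_sig1inv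

lemma inv_ltri (p q r : F) (hp : p ≠ 0) (hr : r ≠ 0) :
    (!![p,0;q,r])⁻¹ = !![p⁻¹, 0; -(q * (p*r)⁻¹), r⁻¹] := by
  apply Matrix.inv_eq_right_inv
  rw [Matrix.mul_fin_two]
  ext i j
  fin_cases i <;> fin_cases j <;> simp [Matrix.one_apply] <;> field_simp <;> ring

lemma inv_diag (p r : F) (hp : p ≠ 0) (hr : r ≠ 0) :
    (!![p,0;0,r])⁻¹ = !![p⁻¹, 0; 0, r⁻¹] := by
  apply Matrix.inv_eq_right_inv
  rw [Matrix.mul_fin_two]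
  ext i j
  fin_cases i <;> fin_cases j <;> simp [Matrix.one_apply] <;> field_simp

lemma isUnit_ltri (p q r : F) (hp : p ≠ 0) (hr : r ≠ 0) : IsUnit !![p,0;q,r] := by
  rw [Matrix.isUnit_iff_isUnit_det, Matrix.det_fin_two_of, isUnit_iff_ne_zero]
  simpa using mul_ne_zero hp hr

lemma t22 (a b c d : F) : (!![a,b;c,d])ᵀ = !![a,c;b,d] := by
  ext i j; fin_cases i <;> fin_cases j <;> simp

lemma mem_H1_ltri (p q r : F) (hp : p ≠ 0) (hr : r ≠ 0) :
    Matrix.fromBlocks !![p,0;q,r] 0 0 ((!![p,0;q,r])⁻¹)ᵀ ∈ H1 F := by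
  constructor
  · refine ⟨Matrix.fromBlocks !![p⁻¹,0;0,r] !![0, -(q*(p*r)⁻¹); -q, 0] 0
      ((!![p⁻¹,0;0,r])⁻¹)ᵀ,
      ⟨!![p⁻¹,0;0,r], !![0, -(q*(p*r)⁻¹); -q, 0], ?_, ?_, rfl⟩, ?_⟩
    · have := isUnit_ltri p⁻¹ (0:F) r (inv_ne_zero hp) hr
      simpa using this
    · rw [inv_diag p⁻¹ r (inv_ne_zero hp) hr, Matrix.mul_fin_two]
      ext i j
      fin_cases i <;> fin_cases j <;> simp <;> field_simp <;> ring
    · rw [sig1_inv_eq, inv_ltri p q r hp hr, inv_diag p⁻¹ r (inv_ne_zero hp) hr,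
        t22, t22]
      ext (i|i) (j|j) <;> fin_cases i <;> fin_cases j <;>
        simp [sig1, sig1inv, Matrix.mul_apply, Fintype.sum_sum_type, Fin.sum_univ_two] <;>
        field_simp <;> ring
  · exact ⟨!![p,0;q,r], 0, isUnit_ltri p q r hp hr, by simp, rfl⟩

lemma P4_mul {m₁ m₂ : Matrix (Fin 2 ⊕ Fin 2) (Fin 2 ⊕ Fin 2) F}
    (h₁ : m₁ ∈ P4 F) (h₂ : m₂ ∈ P4 F) : m₁ * m₂ ∈ P4 F := by
  obtain ⟨g₁, X₁, hu₁, hsy₁, rfl⟩ := h₁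
  obtain ⟨g₂, X₂, hu₂, hsy₂, rfl⟩ := h₂
  have hd₁ : IsUnit g₁.det := (Matrix.isUnit_iff_isUnit_det _).mp hu₁
  have hd₂ : IsUnit g₂.det := (Matrix.isUnit_iff_isUnit_det _).mp hu₂
  refine ⟨g₁ * g₂, g₁ * X₂ + X₁ * (g₂⁻¹)ᵀ, hu₁.mul hu₂, ?_, ?_⟩
  · have key : (g₁ * g₂)⁻¹ * (g₁ * X₂ + X₁ * (g₂⁻¹)ᵀ)
        = g₂⁻¹ * X₂ + g₂⁻¹ * (g₁⁻¹ * (X₁ * (g₂⁻¹)ᵀ)) := by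
      rw [Matrix.mul_inv_rev, Matrix.mul_add]
      congr 1
      · rw [Matrix.mul_assoc, Matrix.nonsing_inv_mul_cancel_left _ _ hd₁]
      · simp [Matrix.mul_assoc]
    have h3 : X₁ᵀ * (g₁⁻¹)ᵀ = g₁⁻¹ * X₁ := by
      rw [← Matrix.transpose_mul]; exact hsy₁
    rw [key, Matrix.transpose_add, hsy₂]
    congr 1
    simp only [Matrix.transpose_mul, Matrix.transpose_transpose, ← Matrix.mul_assoc]
    rw [Matrix.mul_assoc (g₂⁻¹), h3, ← Matrix.mul_assoc]
  · rw [Matrix.fromBlocks_multiply, Matrix.mul_inv_rev, Matrix.transpose_mul]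
    simp [Matrix.mul_assoc]

lemma Spsi_sub_P4 : Spsi F ⊆ P4 F := by
  rintro m ⟨g, X, _, hu, hsy, rfl⟩
  exact ⟨g, X, hu, hsy, rfl⟩

lemma winv : (!![0,1;1,0] : Matrix (Fin 2) (Fin 2) F)⁻¹ = !![0,1;1,0] := by
  apply Matrix.inv_eq_right_inv
  ext i j
  fin_cases i <;> fin_cases j <;>
    simp [Matrix.mul_apply, Fin.sum_univ_two, Matrix.one_apply]

lemma tau1_mem_P4 : tau1 F ∈ P4 F := by
  refine ⟨!![0,1;1,0], 0, ?_, by simp, ?_⟩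
  · rw [Matrix.isUnit_iff_isUnit_det, Matrix.det_fin_two_of, isUnit_iff_ne_zero]
    norm_num
  · rw [winv, t22, tau1]

lemma H1_struct {m : Matrix (Fin 2 ⊕ Fin 2) (Fin 2 ⊕ Fin 2) F} (hm : m ∈ H1 F) :
    ∃ g X : Matrix (Fin 2) (Fin 2) F, IsUnit g ∧ g 0 1 = 0 ∧
      m = Matrix.fromBlocks g X 0 (g⁻¹)ᵀ := by
  obtain ⟨⟨pp, ⟨gp, Xp, hup, hsp, rfl⟩, heq⟩, ⟨g, X, hu, hsy, rfl⟩⟩ := hm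
  refine ⟨g, X, hu, ?_, rfl⟩
  have h01 : (Matrix.fromBlocks g X 0 (g⁻¹)ᵀ) (Sum.inl 0) (Sum.inl 1) = g 0 1 := rfl
  rw [← h01, heq, sig1_inv_eq]
  simp [sig1, sig1inv, Matrix.mul_apply, Fintype.sum_sum_type, Fin.sum_univ_two]

end Aux

/-- `{I₄, τ₁}` is a complete set of `(H₁, S_ψ)`-double coset
representatives in `P`. -/
theorem H1_Spsi_double_cosets (h2 : (2 : F) ≠ 0) :
    (P4 F = DC (H1 F) 1 (Spsi F) ∪ DC (H1 F) (tau1 F) (Spsi F)) ∧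
    Disjoint (DC (H1 F) 1 (Spsi F)) (DC (H1 F) (tau1 F) (Spsi F)) := by
  constructor
  · apply Set.eq_of_subset_of_subset
    · rintro m ⟨g, X, hu, hsy, rfl⟩
      have hdu : IsUnit g.det := (Matrix.isUnit_iff_isUnit_det _).mp hu
      have hdet : g 0 0 * g 1 1 - g 0 1 * g 1 0 ≠ 0 := by
        rw [← Matrix.det_fin_two]; exact hdu.ne_zero
      by_cases hb : g 0 1 = 0
      · left
        have h00 : g 0 0 ≠ 0 := by
          intro h; apply hdet; rw [h, hb]; ring
        have h11 : g 1 1 ≠ 0 := by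
          intro h; apply hdet; rw [h, hb]; ring
        have heta : g = !![g 0 0, 0; g 1 0, g 1 1] := by
          have := Matrix.eta_fin_two g; rw [hb] at this; exact this
        refine ⟨Matrix.fromBlocks g 0 0 (g⁻¹)ᵀ, ?_,
          Matrix.fromBlocks 1 (g⁻¹ * X) 0 1,
          ⟨1, g⁻¹ * X, ⟨1, 1, 0, one_pow 2, one_ne_zero, Matrix.one_fin_two⟩,
            isUnit_one, by simpa using hsy, by simp⟩, ?_⟩
        · rw [heta]; exact mem_H1_ltri (g 0 0) (g 1 0) (g 1 1) h00 h11
        · rw [mul_one, Matrix.fromBlocks_multiply]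
          rw [Matrix.fromBlocks_inj]
          refine ⟨by simp, ?_, by simp, by simp⟩
          rw [Matrix.mul_nonsing_inv_cancel_left _ _ hdu]
          simp
      · right
        set r : F := (g 0 1 * g 1 0 - g 0 0 * g 1 1) * (g 0 1)⁻¹ with hrdef
        have hr : r ≠ 0 := by
          refine mul_ne_zero (fun h => hdet ?_) (inv_ne_zero hb)
          rw [sub_eq_zero] at h ⊢
          exact h.symm
        set gh : Matrix (Fin 2) (Fin 2) F := !![g 0 1, 0; g 1 1, r] with hghdef
        set gs : Matrix (Fin 2) (Fin 2) F := !![1, 0; g 0 0 * (g 0 1)⁻¹, 1] with hgsdef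
        have hgsu : IsUnit gs := isUnit_ltri 1 (g 0 0 * (g 0 1)⁻¹) 1 one_ne_zero one_ne_zero
        have hgsd : IsUnit gs.det := (Matrix.isUnit_iff_isUnit_det _).mp hgsu
        have hw : gh * !![0,1;1,0] * gs = g := by
          ext i j
          fin_cases i <;> fin_cases j <;>
            simp [hghdef, hgsdef, hrdef, Matrix.mul_apply, Fin.sum_univ_two] <;>
            field_simp <;> ring
        have hwT : g⁻¹ᵀ = gh⁻¹ᵀ * !![0,1;1,0] * gs⁻¹ᵀ := by
          have h5 : g⁻¹ = gs⁻¹ * (!![0,1;1,0] * gh⁻¹) := by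
            rw [← hw, Matrix.mul_inv_rev, Matrix.mul_inv_rev, winv]
          rw [h5, Matrix.transpose_mul, Matrix.transpose_mul, t22]
        refine ⟨Matrix.fromBlocks gh 0 0 (gh⁻¹)ᵀ, mem_H1_ltri (g 0 1) (g 1 1) r hb hr,
          Matrix.fromBlocks gs (gs * (g⁻¹ * X)) 0 (gs⁻¹)ᵀ,
          ⟨gs, gs * (g⁻¹ * X), ⟨1, 1, g 0 0 * (g 0 1)⁻¹, one_pow 2, one_ne_zero, rfl⟩, hgsu,
            ?_, rfl⟩, ?_⟩
        · rw [Matrix.nonsing_inv_mul_cancel_left _ _ hgsd]; exact hsy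
        · rw [tau1, Matrix.fromBlocks_multiply, Matrix.fromBlocks_multiply,
            Matrix.fromBlocks_inj]
          refine ⟨?_, ?_, by simp, ?_⟩
          · simpa using hw.symm
          · have : (gh * !![0,1;1,0] + 0 * 0) * (gs * (g⁻¹ * X)) +
                (gh * 0 + 0 * !![0,1;1,0]) * (gs⁻¹)ᵀ = g * (g⁻¹ * X) := by
              rw [← hw]; simp [Matrix.mul_assoc]
            rw [this, Matrix.mul_nonsing_inv_cancel_left _ _ hdu]
          · rw [hwT]; simp
    · rintro m (⟨h, hh, s, hs, rfl⟩ | ⟨h, hh, s, hs, rfl⟩)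
      · exact P4_mul (by simpa using hh.2) (Spsi_sub_P4 hs)
      · exact P4_mul (P4_mul hh.2 tau1_mem_P4) (Spsi_sub_P4 hs)
  · rw [Set.disjoint_left]
    rintro x ⟨h₁, hh₁, s₁, hs₁, rfl⟩ ⟨h₂, hh₂, s₂, hs₂, heq⟩
    obtain ⟨g₁, X₁, hu₁, h01₁, rfl⟩ := H1_struct hh₁
    obtain ⟨g₂, X₂, hu₂, h01₂, rfl⟩ := H1_struct hh₂
    obtain ⟨gs₁, Xs₁, ⟨a₁, d₁, y₁, ha₁, hd₁, rfl⟩, hus₁, hsy₁, rfl⟩ := hs₁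
    obtain ⟨gs₂, Xs₂, ⟨a₂, d₂, y₂, ha₂, hd₂, rfl⟩, hus₂, hsy₂, rfl⟩ := hs₂
    have e1 : ((Matrix.fromBlocks g₁ X₁ 0 (g₁⁻¹)ᵀ * 1 *
        Matrix.fromBlocks !![a₁,0;y₁,d₁] Xs₁ 0 ((!![a₁,0;y₁,d₁])⁻¹)ᵀ :
        Matrix (Fin 2 ⊕ Fin 2) (Fin 2 ⊕ Fin 2) F))
        (Sum.inl 0) (Sum.inl 1) = 0 := by
      rw [mul_one, Matrix.fromBlocks_multiply]
      simp [Matrix.mul_apply, Fin.sum_univ_two, h01₁]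
    have e2 : ((Matrix.fromBlocks g₂ X₂ 0 (g₂⁻¹)ᵀ * tau1 F *
        Matrix.fromBlocks !![a₂,0;y₂,d₂] Xs₂ 0 ((!![a₂,0;y₂,d₂])⁻¹)ᵀ :
        Matrix (Fin 2 ⊕ Fin 2) (Fin 2 ⊕ Fin 2) F))
        (Sum.inl 0) (Sum.inl 1) = g₂ 0 0 * d₂ := by
      rw [tau1, Matrix.fromBlocks_multiply, Matrix.fromBlocks_multiply]
      simp [Matrix.mul_apply, Fin.sum_univ_two, h01₂]
    have h200 : g₂ 0 0 ≠ 0 := by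
      have hd : g₂ 0 0 * g₂ 1 1 - g₂ 0 1 * g₂ 1 0 ≠ 0 := by
        rw [← Matrix.det_fin_two]
        exact ((Matrix.isUnit_iff_isUnit_det _).mp hu₂).ne_zero
      rw [h01₂] at hd
      intro h; apply hd; rw [h]; ring
    rw [heq, e2] at e1
    exact mul_ne_zero h200 hd₂ e1
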